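/- For n = 2r+1 with r ≥ 3, the partition (3,2,2,1^{2r-6}) strictly dominates (3,1^{2r-2}) and there is no partition ν of 2r+1 with every even part of even multiplicity satisfying (3,1^{2r-2}) < ν < (3,2,2,1^{2r-6}). -/

import Mathlib

/-- A partition of `n`: weakly decreasing list of positive integers summing to `n`. -/
def IsPartition (l : List ℕ) (n : ℕ) : Prop :=
  l.Pairwise (· ≥ ·) ∧ (∀ x ∈ l, 0 < x) ∧ l.sum = n

/-- Dominance order: `Dominates l m` means `l ≥ m`. -/
def Dominates (l m : List ℕ) : Prop := ∀ k, (m.take k).sum ≤ (l.take k).sum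

/-- Strict dominance. -/
def StrictDom (l m : List ℕ) : Prop := Dominates l m ∧ l ≠ m

lemma struct12 (t : List ℕ) (hs : t.Pairwise (· ≥ ·)) (hp : ∀ x ∈ t, 0 < x)
    (h2 : ∀ x ∈ t, x ≤ 2) :
    ∃ a b, t = List.replicate a 2 ++ List.replicate b 1 := by
  induction t with
  | nil => exact ⟨0, 0, rfl⟩
  | cons x t ih =>
    rw [List.pairwise_cons] at hs
    have hx1 := hp x (by simp)
    have hx2 := h2 x (by simp)
    interval_cases x
    · -- x = 1 : all of t are 1
      have hall : ∀ y ∈ t, y = 1 := by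
        intro y hy
        have h1 := hs.1 y hy
        have h2 := hp y (List.mem_cons_of_mem _ hy)
        omega
      refine ⟨0, t.length + 1, ?_⟩
      simp [List.replicate_succ]
      exact List.eq_replicate_of_mem hall
    · -- x = 2
      obtain ⟨a, b, ht⟩ := ih hs.2 (fun y hy => hp y (List.mem_cons_of_mem _ hy))
        (fun y hy => h2 y (List.mem_cons_of_mem _ hy))
      -- 2 :: (rep a 2 ++ rep b 1) = rep (a+1) 2 ++ rep b 1
      exact ⟨a + 1, b, by simp [ht, List.replicate_succ]⟩

theorem stmt_4 (r : ℕ) (hr : 3 ≤ r) :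
    let lam : List ℕ := 3 :: 2 :: 2 :: List.replicate (2*r - 6) 1
    let eta : List ℕ := 3 :: List.replicate (2*r - 2) 1
    StrictDom lam eta ∧
    ¬ ∃ nu : List ℕ, IsPartition nu (2*r+1) ∧ (∀ x : ℕ, Even x → Even (nu.count x)) ∧
        StrictDom lam nu ∧ StrictDom nu eta := by
  intro lam eta
  have hrep : ∀ n k : ℕ, ((List.replicate n (1:ℕ)).take k).sum = min k n := by
    intro n k; rw [List.take_replicate]; simp
  constructor
  · constructor
    · intro k
      match k with
      | 0 => simp
      | 1 => simp [lam, eta]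
      | 2 => simp [lam, eta, hrep]; omega
      | 3 => simp [lam, eta, hrep]; omega
      | (k+4) =>
        simp [lam, eta, List.take_succ_cons, List.sum_cons, hrep]
        omega
    · intro h
      have h2 : (2:ℕ) :: 2 :: List.replicate (2*r - 6) 1 = List.replicate (2*r - 2) 1 := by
        simpa [lam, eta] using h
      have h3 : List.replicate (2*r-2) (1:ℕ) = 1 :: List.replicate (2*r-3) 1 := by
        rw [show 2*r-2 = (2*r-3)+1 by omega, List.replicate_succ]
      rw [h3] at h2
      simp at h2
  · rintro ⟨nu, ⟨hsort, hpos, hsum⟩, heven, ⟨hdom1, hne1⟩, ⟨hdom2, hne2⟩⟩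
    -- nu is nonempty with head 3
    obtain ⟨x, t, rfl⟩ : ∃ x t, nu = x :: t := by
      cases nu with
      | nil => simp at hsum
      | cons x t => exact ⟨x, t, rfl⟩
    have hd1 := hdom2 1
    have hd2 := hdom1 1
    simp [lam, eta] at hd1 hd2
    have hx : x = 3 := le_antisymm hd2 hd1
    subst hx
    rw [List.pairwise_cons] at hsort
    -- all elements of t are ≤ 2
    have ht2 : ∀ y ∈ t, y ≤ 2 := by
      intro y hy
      cases t with
      | nil => simp at hy
      | cons z s =>
        have hz := hdom1 2
        simp [lam] at hz
        rw [List.pairwise_cons] at hsort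
        rcases List.mem_cons.mp hy with rfl | hy'
        · omega
        · have := hsort.2.1 y hy'
          omega
    obtain ⟨a, b, rfl⟩ := struct12 t hsort.2
      (fun y hy => hpos y (List.mem_cons_of_mem _ hy)) ht2
    have hsum' : 3 + 2 * a + b = 2 * r + 1 := by
      simp [List.sum_append] at hsum; omega
    -- a ≤ 2 from dominance at k = 4
    have hd4 := hdom1 4
    have hlt4 : ((List.replicate a 2 ++ List.replicate b 1).take 3).sum
        = 2 * min 3 a + min (3 - a) b := by
      rw [List.take_append, List.sum_append, List.take_replicate,
        List.take_replicate, List.length_replicate]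
      simp [mul_comm]
    have hl4 : ((lam.take 4)).sum = 7 + min 1 (2*r-6) := by
      simp [lam, List.take_succ_cons, hrep]; omega
    rw [hl4] at hd4
    simp only [List.take_succ_cons, List.sum_cons, hlt4] at hd4
    have ha : a ≤ 2 := by omega
    interval_cases a
    · -- nu = eta
      apply hne2
      simp only [eta, List.replicate_zero, List.nil_append]
      rw [show b = 2*r-2 by omega]
    · -- count of 2 is odd
      have he := heven 2 ⟨1, rfl⟩
      simp [List.count_cons, List.count_replicate, List.count_append] at he
    · -- nu = lam
      apply hne1.symm
      simp only [lam, List.replicate_succ, List.replicate_zero, List.nil_append,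
        List.cons_append]
      rw [show b = 2*r-6 by omega]
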